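/- Let Q(G₁) and Q(G₂) be connected Laplacian matrices on the same vertex set V = {0,…,n}. Then H_{Del_{G₁}}(O) = H_{Del_{G₂}}(O) if and only if Q(G₁) = Q(G₂); in other words, the Delaunay polytope of the origin determines the Laplacian matrix uniquely. -/

import Mathlib

open Finset

/-- A Laplacian matrix of a multigraph on vertex set `Fin (n+1)`:
symmetric, nonpositive off-diagonal entries, all row sums zero. -/
def IsLaplacian (n : ℕ) (Q : Matrix (Fin (n+1)) (Fin (n+1)) ℤ) : Prop :=
  (∀ i j, Q i j = Q j i) ∧ (∀ i j, i ≠ j → Q i j ≤ 0) ∧ (∀ i, ∑ j, Q i j = 0)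

/-- A connected Laplacian matrix: the graph with an edge `{i,j}` whenever
`b_{ij} = -Q i j > 0` is connected. -/
def IsConnectedLaplacian (n : ℕ) (Q : Matrix (Fin (n+1)) (Fin (n+1)) ℤ) : Prop :=
  IsLaplacian n Q ∧ (SimpleGraph.fromRel (fun i j => Q i j ≠ 0)).Connected

/-- The Laplacian lattice: the subgroup of `ℤ^{n+1}` generated by the rows of `Q`. -/
noncomputable def lapLattice (n : ℕ) (Q : Matrix (Fin (n+1)) (Fin (n+1)) ℤ) :
    AddSubgroup (Fin (n+1) → ℤ) :=
  AddSubgroup.closure (Set.range fun i => Q i)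

/-- The hyperplane `H_0 = {x ∈ ℝ^{n+1} : ∑ x i = 0}`. -/
def H0 (n : ℕ) : Set (Fin (n+1) → ℝ) := {x | ∑ i, x i = 0}

/-- The simplicial distance function on `H_0`: `d_△(p,q) = max_i (p i - q i)`. -/
noncomputable def simpDist (n : ℕ) (p q : Fin (n+1) → ℝ) : ℝ :=
  Finset.univ.sup' Finset.univ_nonempty fun i => p i - q i

/-- Coercion of an integer vector to a real vector. -/
noncomputable def intVec (n : ℕ) (q : Fin (n+1) → ℤ) : Fin (n+1) → ℝ := fun i => (q i : ℝ)

/-- The root lattice `A_n = {x ∈ ℤ^{n+1} : ∑ x i = 0}`. -/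
def rootLattice (n : ℕ) : AddSubgroup (Fin (n+1) → ℤ) where
  carrier := {x | ∑ i, x i = 0}
  add_mem' := by
    intro a b ha hb
    simp only [Set.mem_setOf_eq, Pi.add_apply, Finset.sum_add_distrib] at *
    omega
  zero_mem' := by simp
  neg_mem' := by
    intro a ha
    simp only [Set.mem_setOf_eq, Pi.neg_apply, Finset.sum_neg_distrib] at *
    omega

/-- The `i`-th row of `Q` as a real vector. -/
noncomputable def rowVec (n : ℕ) (Q : Matrix (Fin (n+1)) (Fin (n+1)) ℤ) (i : Fin (n+1)) :
    Fin (n+1) → ℝ := fun j => (Q i j : ℝ)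

/-- `u^σ_k = b_{σ(0)} + ⋯ + b_{σ(k)}`. -/
noncomputable def uPerm (n : ℕ) (Q : Matrix (Fin (n+1)) (Fin (n+1)) ℤ)
    (σ : Equiv.Perm (Fin (n+1))) (k : Fin (n+1)) : Fin (n+1) → ℝ :=
  ∑ j ∈ Finset.Iic k, rowVec n Q (σ j)

/-- The Delaunay polytope of the origin: the union over all permutations `σ`
of the simplices `△_σ = conv{u^σ_0, …, u^σ_n}`. -/
noncomputable def HDel (n : ℕ) (Q : Matrix (Fin (n+1)) (Fin (n+1)) ℤ) :
    Set (Fin (n+1) → ℝ) :=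
  ⋃ σ : Equiv.Perm (Fin (n+1)), convexHull ℝ (Set.range (uPerm n Q σ))

/-- `u_S = ∑_{i ∈ S} b_i`, as a real vector. -/
noncomputable def uCut (n : ℕ) (Q : Matrix (Fin (n+1)) (Fin (n+1)) ℤ)
    (S : Finset (Fin (n+1))) : Fin (n+1) → ℝ := ∑ i ∈ S, rowVec n Q i


section Aux

variable {n : ℕ}

lemma uCut_apply (Q : Matrix (Fin (n+1)) (Fin (n+1)) ℤ) (S : Finset (Fin (n+1)))
    (m : Fin (n+1)) : uCut n Q S m = ((∑ k ∈ S, Q k m : ℤ) : ℝ) := by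
  simp [uCut, rowVec]

/-- Any linear functional bounded on all cut vectors is bounded on `HDel`. -/
lemma hdel_bound (Q : Matrix (Fin (n+1)) (Fin (n+1)) ℤ) (w : Fin (n+1) → ℝ) (B : ℝ)
    (hB : ∀ S : Finset (Fin (n+1)), ∑ m, w m * uCut n Q S m ≤ B)
    {x : Fin (n+1) → ℝ} (hx : x ∈ HDel n Q) :
    ∑ m, w m * x m ≤ B := by
  obtain ⟨σ, hσ⟩ := Set.mem_iUnion.mp hx
  have hlin : IsLinearMap ℝ (fun y : Fin (n+1) → ℝ => ∑ m, w m * y m) := by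
    constructor
    · intro a b; simp [mul_add, Finset.sum_add_distrib]
    · intro c a; simp [Finset.mul_sum]; ring_nf; simp [mul_comm, mul_left_comm]
  have hconv : Convex ℝ {y : Fin (n+1) → ℝ | ∑ m, w m * y m ≤ B} :=
    convex_halfSpace_le hlin B
  have hsub : Set.range (uPerm n Q σ) ⊆ {y : Fin (n+1) → ℝ | ∑ m, w m * y m ≤ B} := by
    rintro _ ⟨k, rfl⟩
    have hkey : uPerm n Q σ k = uCut n Q ((Finset.Iic k).image σ) := by
      unfold uPerm uCut
      rw [Finset.sum_image (fun a _ b _ h => σ.injective h)]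
    rw [Set.mem_setOf_eq, hkey]
    exact hB _
  exact convexHull_min hsub hconv hσ

/-- Every cut vector of a nonempty set lies in `HDel`. -/
lemma uCut_mem_hdel (Q : Matrix (Fin (n+1)) (Fin (n+1)) ℤ) (S : Finset (Fin (n+1)))
    (hS : S.Nonempty) : uCut n Q S ∈ HDel n Q := by
  classical
  have hcard : 1 ≤ S.card := hS.card_pos
  have hle : S.card ≤ n + 1 := le_trans (Finset.card_le_univ S) (by simp)
  set k : Fin (n+1) := ⟨S.card - 1, by omega⟩ with hk
  have hIic : (Finset.Iic k).card = S.card := by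
    rw [Fin.card_Iic]; simp [hk]; omega
  have h1 : Fintype.card {x : Fin (n+1) // x ∈ Finset.Iic k} =
      Fintype.card {x : Fin (n+1) // x ∈ S} := by
    simp only [Fintype.card_coe, hIic]
  have h2 : Fintype.card {x : Fin (n+1) // ¬ x ∈ Finset.Iic k} =
      Fintype.card {x : Fin (n+1) // ¬ x ∈ S} := by
    rw [Fintype.card_subtype_compl, Fintype.card_subtype_compl, h1]
  let e₁ := Fintype.equivOfCardEq h1
  let e₂ := Fintype.equivOfCardEq h2
  let σ : Equiv.Perm (Fin (n+1)) :=
    ((Equiv.sumCompl (· ∈ Finset.Iic k)).symm.trans (Equiv.sumCongr e₁ e₂)).trans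
      (Equiv.sumCompl (· ∈ S))
  have hmaps : ∀ x ∈ Finset.Iic k, σ x ∈ S := by
    intro x hx
    simp only [σ, Equiv.trans_apply]
    rw [Equiv.sumCompl_symm_apply_of_pos hx]
    simp only [Equiv.sumCongr_apply, Sum.map_inl, Equiv.sumCompl_apply_inl]
    exact (e₁ ⟨x, hx⟩).2
  have himg : (Finset.Iic k).image σ = S := by
    apply Finset.eq_of_subset_of_card_le
    · intro y hy
      obtain ⟨x, hx, rfl⟩ := Finset.mem_image.mp hy
      exact hmaps x hx
    · rw [Finset.card_image_of_injective _ σ.injective, hIic]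
  have hval : uCut n Q S = uPerm n Q σ k := by
    unfold uCut uPerm
    rw [← himg, Finset.sum_image (fun a _ b _ h => σ.injective h)]
  exact Set.mem_iUnion.mpr ⟨σ, subset_convexHull ℝ _ ⟨k, hval.symm⟩⟩

lemma diag_nonneg {Q : Matrix (Fin (n+1)) (Fin (n+1)) ℤ} (h : IsLaplacian n Q)
    (i : Fin (n+1)) : 0 ≤ Q i i := by
  have hsum := h.2.2 i
  have h1 : ∑ m ∈ Finset.univ.erase i, Q i m ≤ 0 :=
    Finset.sum_nonpos fun m hm => h.2.1 i m (Ne.symm (Finset.mem_erase.mp hm).1)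
  have h2 : ∑ m ∈ Finset.univ.erase i, Q i m + Q i i = ∑ m, Q i m :=
    Finset.sum_erase_add _ _ (Finset.mem_univ i)
  omega

lemma diag_add_nonneg {Q : Matrix (Fin (n+1)) (Fin (n+1)) ℤ} (h : IsLaplacian n Q)
    {i j : Fin (n+1)} (hij : i ≠ j) : 0 ≤ Q i i + Q i j := by
  have hsum := h.2.2 i
  have hsub : ({i, j} : Finset (Fin (n+1))) ⊆ Finset.univ := Finset.subset_univ _
  have h2 := Finset.sum_sdiff (f := fun m => Q i m) hsub
  have h1 : ∑ m ∈ Finset.univ \ {i, j}, Q i m ≤ 0 := by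
    apply Finset.sum_nonpos
    intro m hm
    have := (Finset.mem_sdiff.mp hm).2
    simp only [Finset.mem_insert, Finset.mem_singleton, not_or] at this
    exact h.2.1 i m (Ne.symm this.1)
  have h3 : ∑ m ∈ ({i, j} : Finset (Fin (n+1))), Q i m = Q i i + Q i j :=
    Finset.sum_pair hij
  rw [h3] at h2
  linarith

lemma cut_le_diag {Q : Matrix (Fin (n+1)) (Fin (n+1)) ℤ} (h : IsLaplacian n Q)
    (i : Fin (n+1)) (S : Finset (Fin (n+1))) : ∑ k ∈ S, Q k i ≤ Q i i := by
  classical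
  rw [← Finset.sum_filter_add_sum_filter_not S (· = i)]
  have h1 : ∑ k ∈ S.filter (¬ · = i), Q k i ≤ 0 :=
    Finset.sum_nonpos fun k hk => h.2.1 k i (by simpa using (Finset.mem_filter.mp hk).2)
  have h2 : ∑ k ∈ S.filter (· = i), Q k i ≤ Q i i := by
    rcases Finset.eq_empty_or_nonempty (S.filter (· = i)) with he | hne
    · rw [he]; simpa using diag_nonneg h i
    · have : S.filter (· = i) = {i} := by
        apply Finset.eq_singleton_iff_nonempty_unique_mem.mpr
        exact ⟨hne, fun x hx => (Finset.mem_filter.mp hx).2⟩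
      rw [this, Finset.sum_singleton]
  omega

lemma cut_le_pair {Q : Matrix (Fin (n+1)) (Fin (n+1)) ℤ} (h : IsLaplacian n Q)
    {i j : Fin (n+1)} (hij : i ≠ j) (S : Finset (Fin (n+1))) :
    ∑ k ∈ S, (Q k i + Q k j) ≤ (Q i i + Q i j) + (Q j j + Q j i) := by
  classical
  rw [← Finset.sum_filter_add_sum_filter_not S (· ∈ ({i, j} : Finset (Fin (n+1))))]
  have h1 : ∑ k ∈ S.filter (¬ · ∈ ({i, j} : Finset (Fin (n+1)))), (Q k i + Q k j) ≤ 0 := by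
    apply Finset.sum_nonpos
    intro k hk
    have hk2 := (Finset.mem_filter.mp hk).2
    simp only [Finset.mem_insert, Finset.mem_singleton, not_or] at hk2
    have := h.2.1 k i hk2.1
    have := h.2.1 k j hk2.2
    omega
  have h2 : ∑ k ∈ S.filter (· ∈ ({i, j} : Finset (Fin (n+1)))), (Q k i + Q k j) ≤
      ∑ k ∈ ({i, j} : Finset (Fin (n+1))), (Q k i + Q k j) := by
    apply Finset.sum_le_sum_of_subset_of_nonneg
      (fun x hx => (Finset.mem_filter.mp hx).2)
    · intro k hk _
      rcases Finset.mem_insert.mp hk with rfl | hk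
      · have := diag_add_nonneg h hij; omega
      · rw [Finset.mem_singleton] at hk; subst hk
        have := diag_add_nonneg h hij.symm; omega
  have h3 : ∑ k ∈ ({i, j} : Finset (Fin (n+1))), (Q k i + Q k j) =
      (Q i i + Q i j) + (Q j i + Q j j) := by
    rw [Finset.sum_pair hij]
  omega

lemma eval_single (i : Fin (n+1)) (x : Fin (n+1) → ℝ) :
    ∑ m, (if m = i then (1 : ℝ) else 0) * x m = x i := by
  simp [ite_mul]

lemma eval_pair (i j : Fin (n+1)) (hij : i ≠ j) (x : Fin (n+1) → ℝ) :
    ∑ m, ((if m = i then (1 : ℝ) else 0) + (if m = j then 1 else 0)) * x m = x i + x j := by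
  simp [add_mul, Finset.sum_add_distrib, ite_mul]

end Aux

/-- the Delaunay polytope of the origin determines the Laplacian
matrix of a connected multigraph uniquely. -/
theorem delaunay_polytope_determines_laplacian (n : ℕ) (hn : 1 ≤ n)
    (Q₁ Q₂ : Matrix (Fin (n+1)) (Fin (n+1)) ℤ)
    (h₁ : IsConnectedLaplacian n Q₁) (h₂ : IsConnectedLaplacian n Q₂) :
    HDel n Q₁ = HDel n Q₂ ↔ Q₁ = Q₂ := by
  constructor
  · intro hEq
    have trans1 : ∀ (w : Fin (n+1) → ℝ) (B : ℝ),
        (∀ S : Finset (Fin (n+1)), ∑ m, w m * uCut n Q₂ S m ≤ B) →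
        ∀ S : Finset (Fin (n+1)), S.Nonempty → ∑ m, w m * uCut n Q₁ S m ≤ B := by
      intro w B hB S hS
      exact hdel_bound Q₂ w B hB (hEq ▸ uCut_mem_hdel Q₁ S hS)
    have trans2 : ∀ (w : Fin (n+1) → ℝ) (B : ℝ),
        (∀ S : Finset (Fin (n+1)), ∑ m, w m * uCut n Q₁ S m ≤ B) →
        ∀ S : Finset (Fin (n+1)), S.Nonempty → ∑ m, w m * uCut n Q₂ S m ≤ B := by
      intro w B hB S hS
      exact hdel_bound Q₁ w B hB (hEq.symm ▸ uCut_mem_hdel Q₂ S hS)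
    have diagEq : ∀ i, Q₁ i i = Q₂ i i := by
      intro i
      have le1 : (Q₁ i i : ℝ) ≤ (Q₂ i i : ℝ) := by
        have := trans1 (fun m => if m = i then 1 else 0) ((Q₂ i i : ℤ) : ℝ)
          (fun S => by
            rw [eval_single i (uCut n Q₂ S), uCut_apply]
            exact_mod_cast cut_le_diag h₂.1 i S)
          {i} (Finset.singleton_nonempty i)
        rw [eval_single i (uCut n Q₁ {i}), uCut_apply] at this
        simpa using this
      have le2 : (Q₂ i i : ℝ) ≤ (Q₁ i i : ℝ) := by
        have := trans2 (fun m => if m = i then 1 else 0) ((Q₁ i i : ℤ) : ℝ)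
          (fun S => by
            rw [eval_single i (uCut n Q₁ S), uCut_apply]
            exact_mod_cast cut_le_diag h₁.1 i S)
          {i} (Finset.singleton_nonempty i)
        rw [eval_single i (uCut n Q₂ {i}), uCut_apply] at this
        simpa using this
      exact_mod_cast le_antisymm le1 le2
    apply Matrix.ext
    intro i j
    by_cases hij : i = j
    · subst hij; exact diagEq i
    · -- off-diagonal: use the pair functional
      have heval : ∀ Q : Matrix (Fin (n+1)) (Fin (n+1)) ℤ,
          ∑ m, ((if m = i then (1 : ℝ) else 0) + (if m = j then 1 else 0)) *
            uCut n Q {i, j} m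
            = (((Q i i + Q i j) + (Q j j + Q j i) : ℤ) : ℝ) := by
        intro Q
        rw [eval_pair i j hij, uCut_apply, uCut_apply, Finset.sum_pair hij,
          Finset.sum_pair hij]
        push_cast
        ring
      have le1 : ((Q₁ i i + Q₁ i j) + (Q₁ j j + Q₁ j i) : ℝ) ≤
          ((Q₂ i i + Q₂ i j) + (Q₂ j j + Q₂ j i) : ℝ) := by
        have := trans1 (fun m => (if m = i then 1 else 0) + (if m = j then 1 else 0))
          (((Q₂ i i + Q₂ i j) + (Q₂ j j + Q₂ j i) : ℤ) : ℝ)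
          (fun S => by
            rw [eval_pair i j hij, uCut_apply, uCut_apply, ← Int.cast_add,
              ← Finset.sum_add_distrib]
            exact_mod_cast cut_le_pair h₂.1 hij S)
          {i, j} ⟨i, Finset.mem_insert_self i {j}⟩
        rw [heval Q₁] at this
        exact_mod_cast this
      have le2 : ((Q₂ i i + Q₂ i j) + (Q₂ j j + Q₂ j i) : ℝ) ≤
          ((Q₁ i i + Q₁ i j) + (Q₁ j j + Q₁ j i) : ℝ) := by
        have := trans2 (fun m => (if m = i then 1 else 0) + (if m = j then 1 else 0))
          (((Q₁ i i + Q₁ i j) + (Q₁ j j + Q₁ j i) : ℤ) : ℝ)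
          (fun S => by
            rw [eval_pair i j hij, uCut_apply, uCut_apply, ← Int.cast_add,
              ← Finset.sum_add_distrib]
            exact_mod_cast cut_le_pair h₁.1 hij S)
          {i, j} ⟨i, Finset.mem_insert_self i {j}⟩
        rw [heval Q₂] at this
        exact_mod_cast this
      have hq : (Q₁ i i + Q₁ i j) + (Q₁ j j + Q₁ j i) =
          (Q₂ i i + Q₂ i j) + (Q₂ j j + Q₂ j i) := by
        exact_mod_cast le_antisymm le1 le2
      have hs1 := h₁.1.1 i j
      have hs2 := h₂.1.1 i j
      have hdi := diagEq i
      have hdj := diagEq j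
      omega
  · rintro rfl; rfl
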